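/- Let a Social Choice MDP be given (a finite MDP whose state set S is a nonempty finite set of profiles and whose action set is X) with discount 0 < γ < 1, let the value function V : Π × S → ℝ satisfy the Bellman equation, and suppose the reward function R is quasi-utilitarian with strictly increasing witness f : ℝ → ℝ, i.e., R(U,a) = f(Σ_{i∈V} U_i(a)) for all U ∈ S and a ∈ X. Then a policy π* is optimal relative to V (i.e., π* ∈ argmax_{π∈Π} V(π,s) for every s ∈ S) if and only if π* is long-run quasi-utilitarian with witness f, i.e., for every s ∈ S, π* ∈ argmax_{π∈Π} Σ_{t=0}^∞ γ^t Σ_{U'∈S} μ_π^t(s,U') f(Σ_{i∈V} U'_i(π(U'))). -/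

import Mathlib

/-- The `t`-step state distribution of a policy `π` in a finite MDP:
`stepDist p π t s s'` is the probability of being in state `s'` after `t` steps
when starting in `s` and following `π`. -/
def stepDist {S A : Type*} [Fintype S] [DecidableEq S] (p : S → A → S → ℝ) (π : S → A) :
    ℕ → S → S → ℝ
  | 0, s, s' => if s' = s then 1 else 0
  | (t + 1), s, s'' => ∑ s' : S, stepDist p π t s s' * p s' (π s') s''

section aux
variable {σ A : Type*} [Fintype σ] [DecidableEq σ]

lemma stepDist_nonneg (p : σ → A → σ → ℝ) (hp : ∀ s a s', 0 ≤ p s a s')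
    (π : σ → A) : ∀ t s s', 0 ≤ stepDist p π t s s'
  | 0, s, s' => by simp only [stepDist]; split <;> norm_num
  | (t+1), s, s'' => Finset.sum_nonneg fun s' _ =>
      mul_nonneg (stepDist_nonneg p hp π t s s') (hp s' (π s') s'')

lemma stepDist_sum (p : σ → A → σ → ℝ) (hp1 : ∀ s a, ∑ s' : σ, p s a s' = 1) (π : σ → A) :
    ∀ t s, ∑ s' : σ, stepDist p π t s s' = 1
  | 0, s => by simp [stepDist]
  | (t+1), s => by
      simp only [stepDist]
      rw [Finset.sum_comm]
      simp [← Finset.mul_sum, hp1, stepDist_sum p hp1 π t s]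

lemma value_eq_tsum
    (p : σ → A → σ → ℝ) (hp0 : ∀ s a s', 0 ≤ p s a s')
    (hp1 : ∀ s a, ∑ s' : σ, p s a s' = 1)
    (γ : ℝ) (hγ0 : 0 < γ) (hγ1 : γ < 1)
    (R : σ → A → ℝ) (Vf : (σ → A) → σ → ℝ)
    (hB : ∀ π s, Vf π s = R s (π s) + γ * ∑ s' : σ, p s (π s) s' * Vf π s')
    (π : σ → A) (s : σ) :
    Vf π s = ∑' t : ℕ, γ ^ t * ∑ s' : σ, stepDist p π t s s' * R s' (π s') := by
  set e : ℕ → ℝ := fun t => ∑ s' : σ, stepDist p π t s s' * R s' (π s') with he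
  have hpart : ∀ n, Vf π s = (∑ t ∈ Finset.range n, γ ^ t * e t)
      + γ ^ n * ∑ s' : σ, stepDist p π n s s' * Vf π s' := by
    intro n
    induction n with
    | zero => simp [stepDist]
    | succ n ih =>
      have step : ∑ s' : σ, stepDist p π n s s' * Vf π s'
          = e n + γ * ∑ s'' : σ, stepDist p π (n+1) s s'' * Vf π s'' := by
        have lhs_eq : ∑ s' : σ, stepDist p π n s s' * Vf π s'
            = ∑ s' : σ, (stepDist p π n s s' * R s' (π s')
              + γ * ∑ s'' : σ, stepDist p π n s s' * p s' (π s') s'' * Vf π s'') := by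
          refine Finset.sum_congr rfl fun s' _ => ?_
          rw [hB π s', mul_add, mul_left_comm, Finset.mul_sum]
          simp_rw [← mul_assoc]
        rw [lhs_eq, Finset.sum_add_distrib]
        congr 1
        rw [← Finset.mul_sum]
        congr 1
        rw [Finset.sum_comm]
        refine Finset.sum_congr rfl fun s'' _ => ?_
        simp only [stepDist, Finset.sum_mul]
      rw [ih, step, Finset.sum_range_succ]
      ring
  have hle1 : ∀ t s s', stepDist p π t s s' ≤ 1 := by
    intro t s₀ s'
    calc stepDist p π t s₀ s'
        ≤ ∑ s'' : σ, stepDist p π t s₀ s'' :=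
          Finset.single_le_sum (fun x _ => stepDist_nonneg p hp0 π t s₀ x) (Finset.mem_univ s')
      _ = 1 := stepDist_sum p hp1 π t s₀
  set CR : ℝ := ∑ s' : σ, |R s' (π s')| with hCR
  have he_bound : ∀ t, |e t| ≤ CR := by
    intro t
    calc |e t| ≤ ∑ s' : σ, |stepDist p π t s s' * R s' (π s')| :=
          Finset.abs_sum_le_sum_abs _ _
      _ ≤ ∑ s' : σ, |R s' (π s')| := by
          refine Finset.sum_le_sum fun s' _ => ?_
          rw [abs_mul, abs_of_nonneg (stepDist_nonneg p hp0 π t s s')]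
          exact mul_le_of_le_one_left (abs_nonneg _) (hle1 t s s')
  set CV : ℝ := ∑ s' : σ, |Vf π s'| with hCV
  have htail_bound : ∀ n, |γ ^ n * ∑ s' : σ, stepDist p π n s s' * Vf π s'| ≤ γ ^ n * CV := by
    intro n
    rw [abs_mul, abs_of_nonneg (pow_nonneg hγ0.le n)]
    refine mul_le_mul_of_nonneg_left ?_ (pow_nonneg hγ0.le n)
    calc |∑ s' : σ, stepDist p π n s s' * Vf π s'|
        ≤ ∑ s' : σ, |stepDist p π n s s' * Vf π s'| := Finset.abs_sum_le_sum_abs _ _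
      _ ≤ ∑ s' : σ, |Vf π s'| := by
          refine Finset.sum_le_sum fun s' _ => ?_
          rw [abs_mul, abs_of_nonneg (stepDist_nonneg p hp0 π n s s')]
          exact mul_le_of_le_one_left (abs_nonneg _) (hle1 n s s')
  have htail : Filter.Tendsto (fun n => γ ^ n * ∑ s' : σ, stepDist p π n s s' * Vf π s')
      Filter.atTop (nhds 0) := by
    have hg : Filter.Tendsto (fun n => γ ^ n * CV) Filter.atTop (nhds 0) := by
      have := (tendsto_pow_atTop_nhds_zero_of_lt_one hγ0.le hγ1).mul_const CV
      simpa using this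
    refine squeeze_zero_norm (fun n => ?_) hg
    simpa [Real.norm_eq_abs, abs_mul, abs_of_pos hγ0] using htail_bound n
  have hsum : Summable (fun t => γ ^ t * e t) := by
    refine Summable.of_norm_bounded
      ((summable_geometric_of_lt_one hγ0.le hγ1).mul_right CR) fun t => ?_
    rw [Real.norm_eq_abs, abs_mul, abs_of_nonneg (pow_nonneg hγ0.le t)]
    exact mul_le_mul_of_nonneg_left (he_bound t) (pow_nonneg hγ0.le t)
  have h1 : Filter.Tendsto (fun n => ∑ t ∈ Finset.range n, γ ^ t * e t)
      Filter.atTop (nhds (Vf π s)) := by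
    have heq : (fun n => ∑ t ∈ Finset.range n, γ ^ t * e t)
        = fun n => Vf π s - γ ^ n * ∑ s' : σ, stepDist p π n s s' * Vf π s' := by
      funext n; linarith [hpart n]
    rw [heq]
    simpa using tendsto_const_nhds.sub htail
  exact tendsto_nhds_unique h1 hsum.hasSum.tendsto_sum_nat
end aux

/-- In a Social Choice MDP (states are a nonempty finite set `S` of
profiles `V → X → ℝ`, actions are the alternatives `X`) with discount `0 < γ < 1`,
if the value function `Vf` satisfies the Bellman equation and the reward function `R`
is quasi-utilitarian with strictly increasing witness `f`, then a policy `π*` is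
optimal relative to `Vf` iff `π*` is long-run quasi-utilitarian with witness `f`. -/
theorem optimal_iff_long_run_quasi_utilitarian
    {V X : Type*} [Fintype V] [Nonempty V] [Fintype X] [Nonempty X]
    (S : Finset (V → X → ℝ)) (hS : S.Nonempty)
    (R : S → X → ℝ) (p : S → X → S → ℝ)
    (hp_nonneg : ∀ (s : S) (a : X) (s' : S), 0 ≤ p s a s')
    (hp_sum : ∀ (s : S) (a : X), ∑ s' : S, p s a s' = 1)
    (γ : ℝ) (hγ0 : 0 < γ) (hγ1 : γ < 1)
    (Vf : (S → X) → S → ℝ)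
    (hBellman : ∀ (π : S → X) (s : S),
      Vf π s = R s (π s) + γ * ∑ s' : S, p s (π s) s' * Vf π s')
    (f : ℝ → ℝ) (hf : StrictMono f)
    (hQU : ∀ (U : S) (a : X), R U a = f (∑ i : V, (U : V → X → ℝ) i a))
    (πstar : S → X) :
    (∀ (s : S) (π : S → X), Vf π s ≤ Vf πstar s)
    ↔
    (∀ (s : S) (π : S → X),
      (∑' t : ℕ, γ ^ t * ∑ U' : S,
          stepDist p π t s U' * f (∑ i : V, (U' : V → X → ℝ) i (π U')))
      ≤ (∑' t : ℕ, γ ^ t * ∑ U' : S,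
          stepDist p πstar t s U' * f (∑ i : V, (U' : V → X → ℝ) i (πstar U')))) := by
  classical
  have : Nonempty ↥S := ⟨⟨hS.choose, hS.choose_spec⟩⟩
  have key : ∀ (π : S → X) (s : S),
      Vf π s = ∑' t : ℕ, γ ^ t * ∑ U' : S,
        stepDist p π t s U' * f (∑ i : V, (U' : V → X → ℝ) i (π U')) := by
    intro π s
    have h := value_eq_tsum p hp_nonneg hp_sum γ hγ0 hγ1 R Vf hBellman π s
    simp_rw [hQU] at h
    exact h
  constructor
  · intro h s π
    rw [← key π s, ← key πstar s]
    exact h s π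
  · intro h s π
    have := h s π
    rwa [← key π s, ← key πstar s] at this
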